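/- Let k ≥ 2 be an integer and let x₀, x₁, x₂, x₃ be i.i.d. random variables uniformly distributed on {1, 2, ..., k}. Let M := E(|x₁ - x₀|). Then E((|x₁ - x₀| - M)(|x₂ - x₁| - M)(|x₃ - x₂| - M)) = -(k - 1)(k - 2)(k + 2)(k + 1)(k² + 5)/(3780k³). -/

import Mathlib

open MeasureTheory ProbabilityTheory
open scoped ENNReal

/-- The uniform probability measure on the integers `{1, ..., k}` (as a measure on `ℕ`). -/
noncomputable def unifMeasure (k : ℕ) : Measure ℕ :=
  (k : ℝ≥0∞)⁻¹ • ∑ i ∈ Finset.Icc 1 k, Measure.dirac i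


open Finset

/-- `∑_{a=1}^k |b - a|` as a polynomial. -/
noncomputable def SAp (K : ℝ) (b : ℕ) : ℝ := (b:ℝ)^2 - (K+1)*(b:ℝ) + K*(K+1)/2

/-- `∑_{c=1}^k |c - b| * SAp K c` as a polynomial. -/
noncomputable def Up (K : ℝ) (b : ℕ) : ℝ :=
  ((1 : ℝ)/6) * (b:ℝ)^4 + ((-1 : ℝ)/3) * (b:ℝ)^3 * K + ((-1 : ℝ)/3) * (b:ℝ)^3
  + ((1 : ℝ)/2) * (b:ℝ)^2 * K^2 + ((1 : ℝ)/2) * (b:ℝ)^2 * K + ((-1 : ℝ)/6) * (b:ℝ)^2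
  + ((-1 : ℝ)/3) * (b:ℝ) * K^3 + ((-1 : ℝ)/2) * (b:ℝ) * K^2 + ((1 : ℝ)/6) * (b:ℝ) * K
  + ((1 : ℝ)/3) * (b:ℝ) + ((1 : ℝ)/6) * K^4 + ((1 : ℝ)/6) * K^3 + ((-1 : ℝ)/6) * K^2
  + ((-1 : ℝ)/6) * K

/-- `∑_{b=1}^n (SAp b - K m)(Up b - K m SAp b)` as a polynomial. -/
noncomputable def Fp (K m : ℝ) (n : ℕ) : ℝ :=
  ((1 : ℝ)/42) * (n:ℝ)^7 + ((-1 : ℝ)/12) * (n:ℝ)^6 * K + ((11 : ℝ)/60) * (n:ℝ)^5 * K^2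
  + ((-7 : ℝ)/30) * (n:ℝ)^5 * K * m + ((-2 : ℝ)/15) * (n:ℝ)^5 + ((-1 : ℝ)/4) * (n:ℝ)^4 * K^3
  + ((7 : ℝ)/12) * (n:ℝ)^4 * K^2 * m + ((1 : ℝ)/3) * (n:ℝ)^4 * K + ((1 : ℝ)/4) * (n:ℝ)^3 * K^4
  + ((-5 : ℝ)/6) * (n:ℝ)^3 * K^3 * m + ((1 : ℝ)/3) * (n:ℝ)^3 * K^2 * m^2
  + ((-1 : ℝ)/2) * (n:ℝ)^3 * K^2 + ((1 : ℝ)/2) * (n:ℝ)^3 * K * m + ((1 : ℝ)/6) * (n:ℝ)^3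
  + ((-1 : ℝ)/6) * (n:ℝ)^2 * K^5 + ((2 : ℝ)/3) * (n:ℝ)^2 * K^4 * m
  + ((-1 : ℝ)/2) * (n:ℝ)^2 * K^3 * m^2 + ((5 : ℝ)/12) * (n:ℝ)^2 * K^3
  + ((-3 : ℝ)/4) * (n:ℝ)^2 * K^2 * m + ((-1 : ℝ)/4) * (n:ℝ)^2 * K + ((1 : ℝ)/12) * (n:ℝ) * K^6
  + ((-5 : ℝ)/12) * (n:ℝ) * K^5 * m + ((1 : ℝ)/2) * (n:ℝ) * K^4 * m^2
  + ((-1 : ℝ)/4) * (n:ℝ) * K^4 + ((3 : ℝ)/4) * (n:ℝ) * K^3 * m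
  + ((-1 : ℝ)/3) * (n:ℝ) * K^2 * m^2 + ((7 : ℝ)/30) * (n:ℝ) * K^2
  + ((-4 : ℝ)/15) * (n:ℝ) * K * m + ((-2 : ℝ)/35) * (n:ℝ)

lemma my_sum_Ioc_split (g : ℕ → ℝ) {b k : ℕ} (h : b ≤ k) :
    ∑ c ∈ Finset.Ioc b k, g c = ∑ c ∈ Finset.Ioc 0 k, g c - ∑ c ∈ Finset.Ioc 0 b, g c := by
  rw [← Finset.sum_Ioc_consecutive g (Nat.zero_le b) h]; ring

lemma my_sum_id (n : ℕ) : ∑ c ∈ Finset.Ioc 0 n, (c:ℝ) = (n:ℝ)*((n:ℝ)+1)/2 := by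
  induction n with
  | zero => simp
  | succ n ih => rw [Finset.sum_Ioc_succ_top (Nat.zero_le n), ih]; push_cast; ring

lemma my_sum_SAp (K : ℝ) (n : ℕ) : ∑ c ∈ Finset.Ioc 0 n, SAp K c
    = ((1 : ℝ)/3) * (n:ℝ)^3 + ((-1 : ℝ)/2) * (n:ℝ)^2 * K + ((1 : ℝ)/2) * (n:ℝ) * K^2
      + ((-1 : ℝ)/3) * (n:ℝ) := by
  induction n with
  | zero => simp
  | succ n ih => rw [Finset.sum_Ioc_succ_top (Nat.zero_le n), ih]; unfold SAp; push_cast; ring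

lemma my_sum_mul_SAp (K : ℝ) (n : ℕ) : ∑ c ∈ Finset.Ioc 0 n, (c:ℝ) * SAp K c
    = ((1 : ℝ)/4) * (n:ℝ)^4 + ((-1 : ℝ)/3) * (n:ℝ)^3 * K + ((1 : ℝ)/6) * (n:ℝ)^3
      + ((1 : ℝ)/4) * (n:ℝ)^2 * K^2 + ((-1 : ℝ)/4) * (n:ℝ)^2 * K + ((-1 : ℝ)/4) * (n:ℝ)^2
      + ((1 : ℝ)/4) * (n:ℝ) * K^2 + ((1 : ℝ)/12) * (n:ℝ) * K + ((-1 : ℝ)/6) * (n:ℝ) := by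
  induction n with
  | zero => simp
  | succ n ih => rw [Finset.sum_Ioc_succ_top (Nat.zero_le n), ih]; unfold SAp; push_cast; ring

lemma my_sum_big (K m : ℝ) (n : ℕ) :
    ∑ b ∈ Finset.Ioc 0 n, (SAp K b - K*m) * (Up K b - K*m*SAp K b) = Fp K m n := by
  induction n with
  | zero => simp [Fp]
  | succ n ih =>
    rw [Finset.sum_Ioc_succ_top (Nat.zero_le n), ih]; unfold SAp Up Fp; push_cast; ring

lemma my_abs_sum {k b : ℕ} (hb : b ≤ k) :
    ∑ a ∈ Finset.Ioc 0 k, |(b:ℝ) - (a:ℝ)| = SAp (k:ℝ) b := by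
  rw [← Finset.sum_Ioc_consecutive _ (Nat.zero_le b) hb]
  have h1 : ∀ a ∈ Finset.Ioc 0 b, |(b:ℝ) - (a:ℝ)| = (b:ℝ) - (a:ℝ) := fun a ha =>
    abs_of_nonneg (sub_nonneg.2 (by exact_mod_cast (Finset.mem_Ioc.1 ha).2))
  have h2 : ∀ a ∈ Finset.Ioc b k, |(b:ℝ) - (a:ℝ)| = (a:ℝ) - (b:ℝ) := fun a ha => by
    rw [abs_sub_comm]
    exact abs_of_nonneg (sub_nonneg.2 (by exact_mod_cast ((Finset.mem_Ioc.1 ha).1).le))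
  rw [Finset.sum_congr rfl h1, Finset.sum_congr rfl h2, my_sum_Ioc_split _ hb]
  simp only [Finset.sum_sub_distrib, Finset.sum_const, Nat.card_Ioc, Nat.sub_zero,
    nsmul_eq_mul, my_sum_id]
  unfold SAp; push_cast; ring

lemma my_abs_sum' {k b : ℕ} (hb : b ≤ k) :
    ∑ a ∈ Finset.Ioc 0 k, |(a:ℝ) - (b:ℝ)| = SAp (k:ℝ) b := by
  exact (Finset.sum_congr rfl fun a _ => abs_sub_comm _ _).trans (my_abs_sum hb)

lemma my_absSAp_sum {k b : ℕ} (hb : b ≤ k) :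
    ∑ c ∈ Finset.Ioc 0 k, |(c:ℝ) - (b:ℝ)| * SAp (k:ℝ) c = Up (k:ℝ) b := by
  rw [← Finset.sum_Ioc_consecutive _ (Nat.zero_le b) hb]
  have h1 : ∀ c ∈ Finset.Ioc 0 b, |(c:ℝ) - (b:ℝ)| * SAp (k:ℝ) c
      = (b:ℝ) * SAp (k:ℝ) c - (c:ℝ) * SAp (k:ℝ) c := by
    intro c hc
    rw [abs_sub_comm, abs_of_nonneg (sub_nonneg.2 (by exact_mod_cast (Finset.mem_Ioc.1 hc).2 : (c:ℝ) ≤ (b:ℝ)))]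
    ring
  have h2 : ∀ c ∈ Finset.Ioc b k, |(c:ℝ) - (b:ℝ)| * SAp (k:ℝ) c
      = (c:ℝ) * SAp (k:ℝ) c - (b:ℝ) * SAp (k:ℝ) c := by
    intro c hc
    rw [abs_of_nonneg (sub_nonneg.2 (by exact_mod_cast ((Finset.mem_Ioc.1 hc).1).le : (b:ℝ) ≤ (c:ℝ)))]
    ring
  rw [Finset.sum_congr rfl h1, Finset.sum_congr rfl h2, my_sum_Ioc_split _ hb]
  simp only [Finset.sum_sub_distrib, ← Finset.mul_sum, my_sum_SAp, my_sum_mul_SAp]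
  unfold Up; push_cast; ring

open MeasureTheory ProbabilityTheory
open scoped ENNReal


lemma my_reduction {Ω : Type*} [MeasurableSpace Ω] (μ : Measure Ω)
    (k : ℕ) (x : Fin 4 → Ω → ℕ)
    (hmeas : ∀ i, Measurable (x i))
    (hdist : ∀ i, Measure.map (x i) μ = unifMeasure k)
    (hindep : iIndepFun x μ)
    (f : ℕ → ℕ → ℕ → ℕ → ℝ) :
    ∫ ω, f (x 0 ω) (x 1 ω) (x 2 ω) (x 3 ω) ∂μ
      = ((k:ℝ)⁻¹)^4 * ∑ a ∈ Finset.Icc 1 k, ∑ b ∈ Finset.Icc 1 k, ∑ c ∈ Finset.Icc 1 k,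
          ∑ d ∈ Finset.Icc 1 k, f a b c d := by
  set I := Finset.Icc 1 k with hI
  set T : Ω → ℕ × ℕ × ℕ × ℕ := fun ω => (x 0 ω, x 1 ω, x 2 ω, x 3 ω) with hT
  have hTm : Measurable T :=
    (hmeas 0).prodMk ((hmeas 1).prodMk ((hmeas 2).prodMk (hmeas 3)))
  have hsing : ∀ (i : Fin 4) (n : ℕ),
      μ (x i ⁻¹' {n}) = if n ∈ I then (k : ℝ≥0∞)⁻¹ else 0 := by
    intro i n
    rw [← Measure.map_apply (hmeas i) (measurableSet_singleton n), hdist i]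
    unfold unifMeasure
    rw [Measure.smul_apply, Measure.finset_sum_apply]
    simp only [Measure.dirac_apply, Set.indicator_apply, Set.mem_singleton_iff,
      Pi.one_apply, smul_eq_mul]
    rw [Finset.sum_ite_eq' I n (fun _ => (1:ℝ≥0∞))]
    by_cases hn : n ∈ I <;> simp [hn]
  have hmap : μ.map T = ((k : ℝ≥0∞)⁻¹)^4 • ∑ p ∈ I ×ˢ I ×ˢ I ×ˢ I, Measure.dirac p := by
    apply MeasureTheory.Measure.ext_of_singleton
    rintro ⟨a, b, c, d⟩
    have hpre : T ⁻¹' {(a, b, c, d)}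
        = ⋂ i ∈ (Finset.univ : Finset (Fin 4)), x i ⁻¹' {![a, b, c, d] i} := by
      ext ω
      simp [hT, Prod.ext_iff, Fin.forall_fin_succ, and_assoc,
        show (Fin.succ 0 : Fin 4) = 1 from rfl, show (Fin.succ 1 : Fin 4) = 2 from rfl,
        show (Fin.succ 2 : Fin 4) = 3 from rfl]
    rw [Measure.map_apply hTm (measurableSet_singleton _), hpre,
      hindep.measure_inter_preimage_eq_mul Finset.univ (fun i _ => measurableSet_singleton _),
      Fin.prod_univ_four]
    simp only [hsing, Matrix.cons_val_zero, Matrix.cons_val_one, Matrix.head_cons,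
      Matrix.cons_val_two, Matrix.tail_cons, Matrix.cons_val_three]
    rw [Measure.smul_apply, Measure.finset_sum_apply]
    simp only [Measure.dirac_apply, Set.indicator_apply, Set.mem_singleton_iff,
      Pi.one_apply, smul_eq_mul]
    rw [Finset.sum_ite_eq' (I ×ˢ I ×ˢ I ×ˢ I) ((a,b,c,d) : ℕ×ℕ×ℕ×ℕ) (fun _ => (1:ℝ≥0∞))]
    simp only [Finset.mem_product]
    by_cases ha : a ∈ I <;> by_cases hb : b ∈ I <;> by_cases hc : c ∈ I <;> by_cases hd : d ∈ I <;>
      simp [ha, hb, hc, hd] <;> ring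
  have hfm : Measurable (fun p : ℕ × ℕ × ℕ × ℕ => f p.1 p.2.1 p.2.2.1 p.2.2.2) :=
    measurable_of_countable _
  have hint : ∀ p : ℕ × ℕ × ℕ × ℕ,
      Integrable (fun q : ℕ × ℕ × ℕ × ℕ => f q.1 q.2.1 q.2.2.1 q.2.2.2) (Measure.dirac p) := by
    intro p
    refine ⟨hfm.aestronglyMeasurable, ?_⟩
    simp [HasFiniteIntegral, lintegral_dirac]
  calc ∫ ω, f (x 0 ω) (x 1 ω) (x 2 ω) (x 3 ω) ∂μ
      = ∫ p, f p.1 p.2.1 p.2.2.1 p.2.2.2 ∂(μ.map T) :=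
        (integral_map hTm.aemeasurable hfm.aestronglyMeasurable).symm
    _ = ((k:ℝ)⁻¹)^4 * ∑ a ∈ I, ∑ b ∈ I, ∑ c ∈ I, ∑ d ∈ I, f a b c d := by
        rw [hmap, integral_smul_measure, integral_finset_sum_measure (fun p _ => hint p)]
        simp only [integral_dirac]
        rw [Finset.sum_product, smul_eq_mul]
        simp only [Finset.sum_product]
        congr 1
        simp [ENNReal.toReal_pow, ENNReal.toReal_inv]

theorem centered_cross_moment_T0111_uniform
    {Ω : Type*} [MeasurableSpace Ω] (μ : Measure Ω) [IsProbabilityMeasure μ]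
    (k : ℕ) (hk : 2 ≤ k) (x : Fin 4 → Ω → ℕ)
    (hmeas : ∀ i, Measurable (x i))
    (hdist : ∀ i, Measure.map (x i) μ = unifMeasure k)
    (hindep : iIndepFun x μ)
    (M : ℝ) (hM : M = ∫ ω, |(x 1 ω : ℝ) - (x 0 ω : ℝ)| ∂μ) :
    ∫ ω, (|(x 1 ω : ℝ) - (x 0 ω : ℝ)| - M) * (|(x 2 ω : ℝ) - (x 1 ω : ℝ)| - M)
        * (|(x 3 ω : ℝ) - (x 2 ω : ℝ)| - M) ∂μ
      = -(((k : ℝ) - 1) * ((k : ℝ) - 2) * ((k : ℝ) + 2) * ((k : ℝ) + 1)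
          * ((k : ℝ) ^ 2 + 5)) / (3780 * (k : ℝ) ^ 3) := by
  have hJ : Finset.Icc 1 k = Finset.Ioc 0 k := by
    ext a; simp only [Finset.mem_Icc, Finset.mem_Ioc]; omega
  have hK0 : (k : ℝ) ≠ 0 := Nat.cast_ne_zero.mpr (by omega)
  have hcard : (Finset.Ioc 0 k).card = k := by simp
  -- the value of M
  have h2 := my_reduction μ k x hmeas hdist hindep (fun a b c d => |(b:ℝ) - (a:ℝ)|)
  rw [hJ] at h2
  have hM2 : M = ((k:ℝ)⁻¹)^4 * ∑ a ∈ Finset.Ioc 0 k, ∑ b ∈ Finset.Ioc 0 k,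
      ∑ c ∈ Finset.Ioc 0 k, ∑ d ∈ Finset.Ioc 0 k, |(b:ℝ) - (a:ℝ)| := hM.trans h2
  have hsum1 : ∑ a ∈ Finset.Ioc 0 k, ∑ b ∈ Finset.Ioc 0 k,
      ∑ c ∈ Finset.Ioc 0 k, ∑ d ∈ Finset.Ioc 0 k, |(b:ℝ) - (a:ℝ)|
      = (k:ℝ) * (k:ℝ) * (((k:ℝ)^3 - (k:ℝ))/3) := by
    simp only [Finset.sum_const, Nat.card_Ioc, Nat.sub_zero, nsmul_eq_mul]
    have e1 : ∀ a ∈ Finset.Ioc 0 k, ∑ b ∈ Finset.Ioc 0 k, (k:ℝ) * ((k:ℝ) * |(b:ℝ) - (a:ℝ)|)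
        = (k:ℝ) * (k:ℝ) * SAp (k:ℝ) a := by
      intro a ha
      rw [← Finset.mul_sum, ← Finset.mul_sum, my_abs_sum' (Finset.mem_Ioc.1 ha).2]
      ring
    refine (Finset.sum_congr rfl e1).trans ?_
    rw [← Finset.mul_sum, my_sum_SAp]
    ring
  have hMeq : M = ((k:ℝ)^2 - 1)/(3*(k:ℝ)) := by
    rw [hM2, hsum1]; field_simp
  have hMK : 3*(k:ℝ)*M = (k:ℝ)^2 - 1 := by
    rw [hMeq]; field_simp
  -- reduce the integral to a finite sum
  have h1 := my_reduction μ k x hmeas hdist hindep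
    (fun a b c d => (|(b:ℝ) - (a:ℝ)| - M) * (|(c:ℝ) - (b:ℝ)| - M) * (|(d:ℝ) - (c:ℝ)| - M))
  rw [hJ] at h1
  refine h1.trans ?_
  -- helper sums
  have ed : ∀ c ∈ Finset.Ioc 0 k, ∑ d ∈ Finset.Ioc 0 k, (|(d:ℝ) - (c:ℝ)| - M)
      = SAp (k:ℝ) c - (k:ℝ)*M := by
    intro c hc
    rw [Finset.sum_sub_distrib, Finset.sum_const, hcard, nsmul_eq_mul,
      my_abs_sum' (Finset.mem_Ioc.1 hc).2]
  have ea : ∀ b ∈ Finset.Ioc 0 k, ∑ a ∈ Finset.Ioc 0 k, (|(b:ℝ) - (a:ℝ)| - M)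
      = SAp (k:ℝ) b - (k:ℝ)*M := by
    intro b hb
    rw [Finset.sum_sub_distrib, Finset.sum_const, hcard, nsmul_eq_mul,
      my_abs_sum (Finset.mem_Ioc.1 hb).2]
  have c1 : ∑ a ∈ Finset.Ioc 0 k, ∑ b ∈ Finset.Ioc 0 k, ∑ c ∈ Finset.Ioc 0 k,
        ∑ d ∈ Finset.Ioc 0 k,
        (|(b:ℝ) - (a:ℝ)| - M) * (|(c:ℝ) - (b:ℝ)| - M) * (|(d:ℝ) - (c:ℝ)| - M)
      = ∑ a ∈ Finset.Ioc 0 k, ∑ b ∈ Finset.Ioc 0 k, ∑ c ∈ Finset.Ioc 0 k,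
        (|(b:ℝ) - (a:ℝ)| - M) * (|(c:ℝ) - (b:ℝ)| - M) * (SAp (k:ℝ) c - (k:ℝ)*M) :=
    Finset.sum_congr rfl fun a _ => Finset.sum_congr rfl fun b _ =>
      Finset.sum_congr rfl fun c hc => by rw [← Finset.mul_sum, ed c hc]
  have c3 : ∀ b ∈ Finset.Ioc 0 k, ∑ c ∈ Finset.Ioc 0 k,
      (|(c:ℝ) - (b:ℝ)| - M) * (SAp (k:ℝ) c - (k:ℝ)*M)
      = Up (k:ℝ) b - (k:ℝ)*M*SAp (k:ℝ) b := by
    intro b hb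
    have hbk := (Finset.mem_Ioc.1 hb).2
    have expand : ∀ c ∈ Finset.Ioc 0 k, (|(c:ℝ) - (b:ℝ)| - M) * (SAp (k:ℝ) c - (k:ℝ)*M)
        = (|(c:ℝ) - (b:ℝ)| * SAp (k:ℝ) c - (k:ℝ)*M*|(c:ℝ) - (b:ℝ)| - M * SAp (k:ℝ) c)
          + M*((k:ℝ)*M) := fun c _ => by ring
    refine (Finset.sum_congr rfl expand).trans ?_
    rw [Finset.sum_add_distrib, Finset.sum_sub_distrib, Finset.sum_sub_distrib,
      Finset.sum_const, hcard, nsmul_eq_mul, ← Finset.mul_sum, ← Finset.mul_sum,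
      my_absSAp_sum hbk, my_abs_sum' hbk, my_sum_SAp]
    linear_combination ((k:ℝ)*M/3) * hMK
  have c2 : ∑ a ∈ Finset.Ioc 0 k, ∑ b ∈ Finset.Ioc 0 k, ∑ c ∈ Finset.Ioc 0 k,
        (|(b:ℝ) - (a:ℝ)| - M) * (|(c:ℝ) - (b:ℝ)| - M) * (SAp (k:ℝ) c - (k:ℝ)*M)
      = ∑ b ∈ Finset.Ioc 0 k, ∑ c ∈ Finset.Ioc 0 k,
        (SAp (k:ℝ) b - (k:ℝ)*M) * ((|(c:ℝ) - (b:ℝ)| - M) * (SAp (k:ℝ) c - (k:ℝ)*M)) := by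
    rw [Finset.sum_comm]
    refine Finset.sum_congr rfl fun b hb => ?_
    rw [Finset.sum_comm]
    refine Finset.sum_congr rfl fun c hc => ?_
    simp only [mul_assoc]
    rw [← Finset.sum_mul, ea b hb]
  have c4 : ∑ b ∈ Finset.Ioc 0 k, ∑ c ∈ Finset.Ioc 0 k,
        (SAp (k:ℝ) b - (k:ℝ)*M) * ((|(c:ℝ) - (b:ℝ)| - M) * (SAp (k:ℝ) c - (k:ℝ)*M))
      = Fp (k:ℝ) M k := by
    refine (Finset.sum_congr rfl fun b hb => ?_).trans (my_sum_big (k:ℝ) M k)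
    rw [← Finset.mul_sum, c3 b hb]
  rw [c1, c2, c4]
  unfold Fp
  rw [hMeq]
  field_simp
  ring
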